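/- The equivalence of the two descriptions of the center of the metaplectic cover: for a local field F containing μ_n and integers r ≥ 1, c, setting d = gcd(r-1+2c, n), an element a ∈ F^× satisfies a^{r-1+2cr} ∈ F^{×n} if and only if a ∈ F^{×(n/d)}. -/

import Mathlib

/-- Let `F` be a local field of characteristic `0` (a locally compact non-discrete
Hausdorff topological field of characteristic zero) containing the group `μ_n` of `n`-th
roots of unity.  Set `m = r - 1 + 2cr` and `d = gcd(m, n)`.  Then an element `a ∈ F^×`
satisfies `a^m ∈ F^{×n}` if and only if `a ∈ F^{×(n/d)} F^{×n}` (equivalently,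
`a ∈ F^{×(n/d)}`): the two descriptions of the center of the metaplectic cover agree. -/
theorem local_field_power_condition
    (F : Type*) [Field F] [TopologicalSpace F] [IsTopologicalDivisionRing F]
    [LocallyCompactSpace F] [T2Space F] [CharZero F]
    (hnd : ¬ DiscreteTopology F)
    (n : ℕ) (hn : 2 ≤ n) (hμ : ∃ ζ : Fˣ, orderOf ζ = n)
    (r c : ℕ) (hr : 1 ≤ r) :
    ∀ a : Fˣ,
      (∃ b : Fˣ, a ^ (r - 1 + 2 * c * r) = b ^ n) ↔
      (∃ b b' : Fˣ, a = b ^ (n / Nat.gcd (r - 1 + 2 * c * r) n) * b' ^ n) := by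
  intro a
  set m : ℕ := r - 1 + 2 * c * r with hm
  set d : ℕ := Nat.gcd m n with hd
  have hn0 : 0 < n := by omega
  have hd0 : 0 < d := Nat.gcd_pos_of_pos_right _ hn0
  have hdn : d ∣ n := Nat.gcd_dvd_right m n
  have hdm : d ∣ m := Nat.gcd_dvd_left m n
  obtain ⟨k, hk⟩ := hdn
  have hknd : n / d = k := by rw [hk]; exact Nat.mul_div_cancel_left k hd0
  constructor
  · rintro ⟨b, hb⟩
    obtain ⟨ζ, hζ⟩ := hμ
    -- Bezout
    set u := Nat.gcdA m n with hu
    set v := Nat.gcdB m n with hv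
    have hbez : (d : ℤ) = m * u + n * v := Nat.gcd_eq_gcd_ab m n
    have hb' : a ^ (m : ℤ) = b ^ (n : ℤ) := by
      rw [zpow_natCast, zpow_natCast, hb]
    set c0 : Fˣ := b ^ u * a ^ v with hc0
    have h1 : a ^ (d : ℤ) = c0 ^ (n : ℤ) := by
      rw [hbez, zpow_add, zpow_mul, zpow_mul, hb', hc0, mul_zpow, ← zpow_mul, ← zpow_mul, ← zpow_mul,
        ← zpow_mul, mul_comm u (n:ℤ), mul_comm v (n:ℤ)]
    -- x is a d-th root of unity
    set x : Fˣ := a * (c0 ^ k)⁻¹ with hx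
    have hxd : x ^ d = 1 := by
      have : c0 ^ (n : ℤ) = (c0 ^ k) ^ (d : ℤ) := by
        rw [zpow_natCast, zpow_natCast, ← pow_mul, hk, mul_comm]
      rw [hx, mul_pow, inv_pow, ← zpow_natCast a d, h1, this, zpow_natCast,
        mul_inv_cancel]
    -- ζ ^ k is a primitive d-th root of unity
    have hk0 : k ≠ 0 := by rintro rfl; omega
    have hok : orderOf (ζ ^ k) = d := by
      rw [orderOf_pow' ζ hk0, hζ, Nat.gcd_eq_right ⟨d, by rw [hk]; ring⟩, hk,
        Nat.mul_div_cancel _ (Nat.pos_of_ne_zero hk0)]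
    have hprim : IsPrimitiveRoot ((ζ ^ k : Fˣ) : F) d := by
      rw [IsPrimitiveRoot.coe_units_iff]
      exact hok ▸ IsPrimitiveRoot.orderOf (ζ ^ k)
    have : NeZero d := ⟨hd0.ne'⟩
    have hxF : ((x : F)) ^ d = 1 := by
      rw [← Units.val_pow_eq_pow_val, hxd, Units.val_one]
    obtain ⟨i, _, hi⟩ := hprim.eq_pow_of_pow_eq_one hxF
    have hxi : x = (ζ ^ k) ^ i := by
      apply Units.ext
      rw [← hi]
      push_cast
      ring
    refine ⟨c0 * ζ ^ i, 1, ?_⟩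
    rw [hknd, one_pow, mul_one, mul_pow]
    have : a = c0 ^ k * x := by rw [hx, mul_comm a, mul_inv_cancel_left]
    rw [this, hxi, ← pow_mul, ← pow_mul, mul_comm i k]
  · rintro ⟨b, b', rfl⟩
    refine ⟨b ^ (m / d) * b' ^ m, ?_⟩
    rw [mul_pow, mul_pow, ← pow_mul, ← pow_mul, ← pow_mul, ← pow_mul, hknd]
    congr 2
    · -- k * m = m / d * n
      obtain ⟨l, hl⟩ := hdm
      rw [hl, hk, Nat.mul_div_cancel_left l hd0]
      ring
    · ring
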